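/- Let w_1, …, w_n be polynomials with real coefficients (in any number of variables), each of which is a sum of squares. Then the polynomial (w_1^n + w_2^n + … + w_n^n)/n − w_1·w_2⋯w_n is a sum of squares of polynomials. -/

import Mathlib

open MvPolynomial

/-- A polynomial is a sum of squares if it is a finite sum of squares of polynomials. -/
def IsSOS {σ : Type*} (p : MvPolynomial σ ℝ) : Prop :=
  ∃ (r : ℕ) (q : Fin r → MvPolynomial σ ℝ), p = ∑ i, q i ^ 2

section SOSLemmas

variable {R : Type*} [CommRing R]

lemma sos_sq (a : R) : IsSumSq (a ^ 2) := by
  simpa [sq] using IsSumSq.sq_add a 0 IsSumSq.zero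

lemma sos_sq_mul (a : R) {s : R} (hs : IsSumSq s) : IsSumSq (a ^ 2 * s) := by
  induction hs with
  | zero => simpa using IsSumSq.zero
  | @sq_add b t ht ih =>
      have h : a ^ 2 * (b * b + t) = (a * b) * (a * b) + a ^ 2 * t := by ring
      rw [h]
      exact IsSumSq.sq_add _ ih

lemma sos_mul {p q : R} (hp : IsSumSq p) (hq : IsSumSq q) : IsSumSq (p * q) := by
  induction hp with
  | zero => simpa using IsSumSq.zero
  | @sq_add a s hs ih =>
      have h : (a * a + s) * q = a ^ 2 * q + s * q := by ring
      rw [h]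
      exact (sos_sq_mul a hq).add ih

lemma sos_one : IsSumSq (1 : R) := by
  have h := sos_sq (1 : R)
  simpa using h

lemma sos_pow {p : R} (hp : IsSumSq p) (t : ℕ) : IsSumSq (p ^ t) := by
  induction t with
  | zero => simpa using sos_one
  | succ k ih => rw [pow_succ]; exact sos_mul ih hp

lemma sos_sum {ι : Type*} (s : Finset ι) (f : ι → R) (h : ∀ i ∈ s, IsSumSq (f i)) :
    IsSumSq (∑ i ∈ s, f i) :=
  Finset.sum_induction f IsSumSq (fun _ _ ha hb => ha.add hb) IsSumSq.zero h

/-- certificate for the Chebyshev-type terms -/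
lemma sos_cheb {x y : R} (hx : IsSumSq x) (hy : IsSumSq y) (n : ℕ) :
    IsSumSq ((x - y) * (x ^ n - y ^ n)) := by
  have h : (x - y) * (x ^ n - y ^ n)
      = (x - y) ^ 2 * ∑ i ∈ Finset.range n, x ^ i * y ^ (n - 1 - i) := by
    rw [← geom_sum₂_mul]; ring
  rw [h]
  exact sos_sq_mul _ (sos_sum _ _ fun i _ => sos_mul (sos_pow hx i) (sos_pow hy _))

variable {A : Type*} [CommRing A] [Algebra ℝ A]

lemma sos_smul {c : ℝ} (hc : 0 ≤ c) {p : A} (hp : IsSumSq p) : IsSumSq (c • p) := by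
  have h : (Real.sqrt c • (1 : A)) ^ 2 * p = c • p := by
    rw [smul_pow, one_pow, Real.sq_sqrt hc, smul_mul_assoc, one_mul]
  rw [← h]
  exact sos_sq_mul _ hp

lemma sos_div_nat {m : ℕ} (hm : 0 < m) {X : A} (h : IsSumSq ((m : A) * X)) : IsSumSq X := by
  have key : ((m : ℝ)⁻¹ • ((m : A) * X)) = X := by
    have h1 : (m : A) * X = (m : ℝ) • X := by
      rw [← nsmul_eq_mul, ← Nat.cast_smul_eq_nsmul ℝ m X]
    rw [h1, smul_smul, inv_mul_cancel₀ (by exact_mod_cast hm.ne'), one_smul]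
  rw [← key]
  exact sos_smul (by positivity) h

/-- Core cone-form AM-GM: for sums of squares `a i`,
`∑ a i ^ n - n * ∏ a i` is a sum of squares. -/
lemma sos_amgm (n : ℕ) (hn : 1 ≤ n) :
    ∀ a : Fin n → A, (∀ i, IsSumSq (a i)) →
      IsSumSq ((∑ i, a i ^ n) - (n : A) * ∏ i, a i) := by
  induction n, hn using Nat.le_induction with
  | base =>
      intro a ha
      simp only [Fin.sum_univ_one, Fin.prod_univ_one, pow_one, Nat.cast_one, one_mul,
        sub_self]
      exact IsSumSq.zero
  | succ n hn ih =>
      intro a ha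
      -- Chebyshev part
      have h1 : IsSumSq (∑ i, ∑ j, (a i - a j) * (a i ^ n - a j ^ n)) :=
        sos_sum _ _ fun i _ => sos_sum _ _ fun j _ => sos_cheb (ha i) (ha j) n
      have e1 : (∑ i, ∑ j, (a i - a j) * (a i ^ n - a j ^ n))
          = 2 * (((n : A) + 1) * (∑ i, a i ^ (n + 1))
              - (∑ i, a i) * (∑ i, a i ^ n)) := by
        have expand : ∀ i j : Fin (n + 1), (a i - a j) * (a i ^ n - a j ^ n)
            = a i ^ (n + 1) - a i * a j ^ n - a j * a i ^ n + a j ^ (n + 1) := by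
          intro i j; ring
        simp only [expand, Finset.sum_add_distrib, Finset.sum_sub_distrib,
          Finset.sum_const, Finset.card_univ, Fintype.card_fin, ← Finset.mul_sum,
          ← Finset.sum_mul, nsmul_eq_mul]
        push_cast
        ring
      -- Induction part: leave-one-out AM-GM
      have h2 : IsSumSq (∑ j, a j * ((∑ i : Fin n, a (j.succAbove i) ^ n)
          - (n : A) * ∏ i : Fin n, a (j.succAbove i))) :=
        sos_sum _ _ fun j _ => sos_mul (ha j) (ih _ (fun i => ha _))
      have e2 : (∑ j, a j * ((∑ i : Fin n, a (j.succAbove i) ^ n)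
              - (n : A) * ∏ i : Fin n, a (j.succAbove i)))
          = (∑ i, a i) * (∑ i, a i ^ n) - (∑ i, a i ^ (n + 1))
            - ((n : A) + 1) * ((n : A) * ∏ i, a i) := by
        have key : ∀ j : Fin (n + 1),
            a j * ((∑ i : Fin n, a (j.succAbove i) ^ n)
              - (n : A) * ∏ i : Fin n, a (j.succAbove i))
            = a j * (∑ i, a i ^ n) - a j ^ (n + 1) - (n : A) * ∏ i, a i := by
          intro j
          have hs := Fin.sum_univ_succAbove (fun i => a i ^ n) j
          have hp := Fin.prod_univ_succAbove a j
          have h1' : (∑ i : Fin n, a (j.succAbove i) ^ n) = (∑ i, a i ^ n) - a j ^ n := by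
            rw [hs]; ring
          rw [h1', hp]; ring
        simp only [key, Finset.sum_sub_distrib, ← Finset.sum_mul, Finset.sum_const,
          Finset.card_univ, Fintype.card_fin, nsmul_eq_mul]
        push_cast
        ring
      have htot : IsSumSq ((∑ i, ∑ j, (a i - a j) * (a i ^ n - a j ^ n))
          + ((∑ j, a j * ((∑ i : Fin n, a (j.succAbove i) ^ n)
              - (n : A) * ∏ i : Fin n, a (j.succAbove i)))
            + (∑ j, a j * ((∑ i : Fin n, a (j.succAbove i) ^ n)
              - (n : A) * ∏ i : Fin n, a (j.succAbove i))))) :=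
        h1.add (h2.add h2)
      have etot : (∑ i, ∑ j, (a i - a j) * (a i ^ n - a j ^ n))
          + ((∑ j, a j * ((∑ i : Fin n, a (j.succAbove i) ^ n)
              - (n : A) * ∏ i : Fin n, a (j.succAbove i)))
            + (∑ j, a j * ((∑ i : Fin n, a (j.succAbove i) ^ n)
              - (n : A) * ∏ i : Fin n, a (j.succAbove i))))
          = ((2 * n : ℕ) : A) * ((∑ i, a i ^ (n + 1)) - ((n + 1 : ℕ) : A) * ∏ i, a i) := by
        rw [e1, e2]
        push_cast
        ring
      rw [etot] at htot
      exact sos_div_nat (by omega) htot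

end SOSLemmas

lemma isSumSq_of_isSOS {σ : Type*} {p : MvPolynomial σ ℝ} (h : IsSOS p) : IsSumSq p := by
  obtain ⟨r, q, rfl⟩ := h
  exact sos_sum _ _ fun i _ => sos_sq (q i)

lemma isSOS_of_isSumSq {σ : Type*} {p : MvPolynomial σ ℝ} (h : IsSumSq p) : IsSOS p := by
  induction h with
  | zero => exact ⟨0, fun _ => 0, by simp⟩
  | @sq_add a S hS ih =>
      obtain ⟨r, q, hq⟩ := ih
      refine ⟨r + 1, Fin.cons a q, ?_⟩
      rw [Fin.sum_univ_succ, Fin.cons_zero]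
      simp only [Fin.cons_succ]
      rw [← hq, sq]

/-- SOS version of the AM-GM inequality: if `w 1, …, w n` are sums of squares then
`(w 1 ^ n + ⋯ + w n ^ n)/n - w 1 ⋯ w n` is a sum of squares. -/
theorem stmt0 {σ : Type*} (n : ℕ) (hn : 1 ≤ n) (w : Fin n → MvPolynomial σ ℝ)
    (hw : ∀ i, IsSOS (w i)) :
    IsSOS ((n : ℝ)⁻¹ • (∑ i, w i ^ n) - ∏ i, w i) := by
  have h := sos_amgm n hn w (fun i => isSumSq_of_isSOS (hw i))
  have h2 : IsSumSq ((n : ℝ)⁻¹ • ((∑ i, w i ^ n) - (n : MvPolynomial σ ℝ) * ∏ i, w i)) :=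
    sos_smul (by positivity) h
  have e : (n : ℝ)⁻¹ • ((∑ i, w i ^ n) - (n : MvPolynomial σ ℝ) * ∏ i, w i)
      = (n : ℝ)⁻¹ • (∑ i, w i ^ n) - ∏ i, w i := by
    rw [smul_sub]
    congr 1
    have h1 : (n : MvPolynomial σ ℝ) * ∏ i, w i = (n : ℝ) • ∏ i, w i := by
      rw [← nsmul_eq_mul, ← Nat.cast_smul_eq_nsmul ℝ n]
    rw [h1, smul_smul, inv_mul_cancel₀ (by exact_mod_cast hn.trans_lt' Nat.zero_lt_one |>.ne'  ), one_smul]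
  rw [e] at h2
  exact isSOS_of_isSumSq h2
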